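/- Let k ≥ 2 and suppose d categorical features with finite domains are partitioned into m functional-dependency chains of lengths d₁,…,d_m (so d = d₁ + ⋯ + d_m), where within each chain consecutive features are related by functions as in an FD-chain: for every data point the value of each feature in a chain determines the value of the next feature in that chain. For each feature, form k centroids as in the optimal categorical clustering (the k−1 heaviest indicator vectors as singletons plus the weighted centroid of the remaining light indicators), and assign each data point x ∈ X to the grid point whose component for each feature is the nearest of that feature's centroids to the one-hot encoding of the corresponding value of x. Then the number of grid points that are the assignment of at least one data point (hence the number of grid points of nonzero weight) is at most ∏_{i=1}^m (1 + d_i(k−1)). -/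
import Mathlib


open Finset

noncomputable section

open Classical in
/-- The marginal weight of a value `e` of feature `t`: the total weight of the data
points `x ∈ X` with `x t = e`. -/
def margWeight {ι : Type} {D : ι → Type} [∀ t, Fintype (D t)]
    (X : Finset (∀ t, D t)) (w : (∀ t, D t) → ℝ) (t : ι) (e : D t) : ℝ :=
  ∑ x ∈ X.filter (fun x => x t = e), w x

open Classical in
/-- The "light" values of feature `t`: those occurring in the data `X` but not in the
heavy set `H t`. -/
def lightSet {ι : Type} {D : ι → Type} [∀ t, Fintype (D t)]
    (X : Finset (∀ t, D t)) (H : ∀ t, Finset (D t)) (t : ι) : Finset (D t) :=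
  (X.image (fun x => x t)) \ H t

open Classical in
/-- The weighted centroid of the one-hot encodings of the light values of feature `t`. -/
def lightCentroid {ι : Type} {D : ι → Type} [∀ t, Fintype (D t)]
    (X : Finset (∀ t, D t)) (w : (∀ t, D t) → ℝ) (H : ∀ t, Finset (D t)) (t : ι) :
    EuclideanSpace ℝ (D t) :=
  ∑ e ∈ lightSet X H t,
    (margWeight X w t e / ∑ e' ∈ lightSet X H t, margWeight X w t e') •
      EuclideanSpace.single e (1 : ℝ)

open Classical in
/-- The componentwise nearest-centroid assignment map: feature value `x t` is sent to its
own one-hot vector if it is heavy, and to the light centroid `μ_t` otherwise. -/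
def assign {ι : Type} {D : ι → Type} [∀ t, Fintype (D t)]
    (X : Finset (∀ t, D t)) (w : (∀ t, D t) → ℝ) (H : ∀ t, Finset (D t))
    (x : ∀ t, D t) (t : ι) : EuclideanSpace ℝ (D t) :=
  if x t ∈ H t then EuclideanSpace.single (x t) (1 : ℝ) else lightCentroid X w H t

open Classical in
/-- Auxiliary: the key of data point `x` on chain `j`: the first heavy position of `x`
along chain `j` together with the (heavy) value of `x` there, or `none` if all values of
`x` along chain `j` are light. -/
def chainKey {m : ℕ} {len : Fin m → ℕ} {D : (Σ j : Fin m, Fin (len j)) → Type}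
    [∀ t, Fintype (D t)] (H : ∀ t, Finset (D t)) (x : ∀ t, D t) (j : Fin m) :
    Option (Σ p : Fin (len j), D ⟨j, p⟩) :=
  if h : (Finset.univ.filter
      (fun p : Fin (len j) => x ⟨j, p⟩ ∈ H ⟨j, p⟩)).Nonempty then
    some ⟨(Finset.univ.filter
        (fun p : Fin (len j) => x ⟨j, p⟩ ∈ H ⟨j, p⟩)).min' h,
      x ⟨j, (Finset.univ.filter
        (fun p : Fin (len j) => x ⟨j, p⟩ ∈ H ⟨j, p⟩)).min' h⟩⟩
  else none

/-- Auxiliary: if `g` determines `f` on `X` then `f` has at most as many values on `X`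
as `g` does. -/
lemma card_image_le_of_determines {α β γ : Type*} [DecidableEq β] [DecidableEq γ]
    (X : Finset α) (f : α → β) (g : α → γ)
    (h : ∀ x ∈ X, ∀ y ∈ X, g x = g y → f x = f y) :
    (X.image f).card ≤ (X.image g).card := by
  classical
  rcases X.eq_empty_or_nonempty with rfl | ⟨x0, hx0⟩
  · simp
  · apply Finset.card_le_card_of_surjOn
      (fun c => if hc : ∃ x ∈ X, g x = c then f hc.choose else f x0)
    intro b hb
    simp only [Finset.coe_image, Set.mem_image] at hb ⊢
    obtain ⟨x, hx, rfl⟩ := hb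
    refine ⟨g x, ⟨x, hx, rfl⟩, ?_⟩
    have hc : ∃ x' ∈ X, g x' = g x := ⟨x, hx, rfl⟩
    simp only [dif_pos hc]
    exact h _ hc.choose_spec.1 _ hx hc.choose_spec.2

open Classical in
/-- suppose `d = d₁ + ⋯ + d_m` categorical features are partitioned into
`m` functional-dependency chains of lengths `d₁,…,d_m` (features are indexed by pairs
`⟨j, p⟩`, chain `j`, position `p`; within each chain every feature functionally determines
the next one on the data `X`).  For each feature take the `k` centroids of the optimal
categorical clustering (the `k − 1` heaviest one-hot vectors plus the light centroid) and
assign each data point `x ∈ X` componentwise to its nearest centroid (heavy value ↦ its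
one-hot vector, light value ↦ the light centroid).  Then the number of grid points which
are the assignment of at least one data point, i.e. the number of grid points of nonzero
weight, is at most `∏_{j=1}^m (1 + d_j(k − 1))`. -/
theorem statement19 (m k : ℕ) (hm : 1 ≤ m) (hk : 2 ≤ k)
    (len : Fin m → ℕ) (hlen : ∀ j, 1 ≤ len j)
    (D : (Σ j : Fin m, Fin (len j)) → Type) [∀ t, Fintype (D t)]
    (X : Finset (∀ t, D t)) (w : (∀ t, D t) → ℝ) (hw : ∀ x ∈ X, 0 < w x)
    (hchain : ∀ (j : Fin m) (p : ℕ) (h : p + 1 < len j),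
      ∃ f : D ⟨j, ⟨p, Nat.lt_of_succ_lt h⟩⟩ → D ⟨j, ⟨p + 1, h⟩⟩,
        ∀ x ∈ X, x ⟨j, ⟨p + 1, h⟩⟩ = f (x ⟨j, ⟨p, Nat.lt_of_succ_lt h⟩⟩))
    (H : ∀ t, Finset (D t)) (hHcard : ∀ t, (H t).card = k - 1)
    (hHheavy : ∀ t, ∀ e ∈ H t, ∀ e', e' ∉ H t →
      margWeight X w t e' ≤ margWeight X w t e) :
    (X.image (assign X w H)).card ≤ ∏ j : Fin m, (1 + len j * (k - 1)) := by
  classical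
  -- propagation along a chain: equal values at position `p` imply equal values at all
  -- later positions
  have prop : ∀ (j : Fin m) (p : ℕ) (hp : p < len j) (q : ℕ), p ≤ q →
      ∀ (hq : q < len j), ∀ x ∈ X, ∀ y ∈ X,
      x ⟨j, ⟨p, hp⟩⟩ = y ⟨j, ⟨p, hp⟩⟩ → x ⟨j, ⟨q, hq⟩⟩ = y ⟨j, ⟨q, hq⟩⟩ := by
    intro j p hp q hpq
    induction q, hpq using Nat.le_induction with
    | base => intro hq x hx y hy h; exact h
    | succ q hq' ih =>
      intro hq x hx y hy h
      obtain ⟨f, hf⟩ := hchain j q hq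
      rw [hf x hx, hf y hy, ih (Nat.lt_of_succ_lt hq) x hx y hy h]
  have propFin : ∀ (j : Fin m) (p q : Fin (len j)), p ≤ q →
      ∀ x ∈ X, ∀ y ∈ X, x ⟨j, p⟩ = y ⟨j, p⟩ → x ⟨j, q⟩ = y ⟨j, q⟩ := by
    intro j p q hpq x hx y hy h
    exact prop j p.1 p.2 q.1 hpq q.2 x hx y hy h
  -- the chain keys determine the assignment
  have keydet : ∀ x ∈ X, ∀ y ∈ X, ∀ j : Fin m, chainKey H x j = chainKey H y j →
      ∀ p : Fin (len j), assign X w H x ⟨j, p⟩ = assign X w H y ⟨j, p⟩ := by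
    intro x hx y hy j hkey p
    set Sx := Finset.univ.filter (fun p : Fin (len j) => x ⟨j, p⟩ ∈ H ⟨j, p⟩) with hSx
    set Sy := Finset.univ.filter (fun p : Fin (len j) => y ⟨j, p⟩ ∈ H ⟨j, p⟩) with hSy
    by_cases hX : Sx.Nonempty <;> by_cases hY : Sy.Nonempty
    · -- both have a heavy position
      simp only [chainKey, ← hSx, ← hSy, dif_pos hX, dif_pos hY,
        Option.some.injEq] at hkey
      obtain ⟨h1, h2⟩ := Sigma.mk.inj_iff.mp hkey
      rw [← h1] at h2
      have hval : x ⟨j, Sx.min' hX⟩ = y ⟨j, Sx.min' hX⟩ := eq_of_heq h2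
      rcases lt_or_ge p (Sx.min' hX) with hlt | hge
      · -- before the first heavy position: both light
        have hlx : x ⟨j, p⟩ ∉ H ⟨j, p⟩ := by
          intro hmem
          have : Sx.min' hX ≤ p := Finset.min'_le _ _ (by simp [hSx, hmem])
          exact absurd this (not_le.mpr hlt)
        have hly : y ⟨j, p⟩ ∉ H ⟨j, p⟩ := by
          intro hmem
          have : Sy.min' hY ≤ p := Finset.min'_le _ _ (by simp [hSy, hmem])
          rw [← h1] at this
          exact absurd this (not_le.mpr hlt)
        simp [assign, hlx, hly]
      · -- at or after the first heavy position: values coincide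
        have hval' : x ⟨j, p⟩ = y ⟨j, p⟩ :=
          propFin j (Sx.min' hX) p hge x hx y hy hval
        simp only [assign, hval']
    · -- key x = some, key y = none: impossible
      simp only [chainKey, ← hSx, ← hSy, dif_pos hX, dif_neg hY] at hkey
      exact absurd hkey (by simp)
    · simp only [chainKey, ← hSx, ← hSy, dif_neg hX, dif_pos hY] at hkey
      exact absurd hkey (by simp)
    · -- no heavy position at all: everything is light
      have hlx : x ⟨j, p⟩ ∉ H ⟨j, p⟩ := by
        intro hmem
        exact hX ⟨p, by simp [hSx, hmem]⟩
      have hly : y ⟨j, p⟩ ∉ H ⟨j, p⟩ := by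
        intro hmem
        exact hY ⟨p, by simp [hSy, hmem]⟩
      simp [assign, hlx, hly]
  -- hence the assignment has at most as many values as the key tuple
  have step1 : (X.image (assign X w H)).card ≤ (X.image (chainKey H)).card := by
    apply card_image_le_of_determines X (assign X w H) (chainKey H)
    intro x hx y hy hk
    funext t
    obtain ⟨j, p⟩ := t
    exact keydet x hx y hy j (congrFun hk j) p
  refine step1.trans ?_
  -- count the possible key tuples
  have hsub : X.image (chainKey H) ⊆ Fintype.piFinset (fun j : Fin m =>
      insert none ((Finset.univ.sigma (fun p : Fin (len j) => H ⟨j, p⟩)).image some)) := by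
    intro s hs
    obtain ⟨x, hx, rfl⟩ := Finset.mem_image.mp hs
    rw [Fintype.mem_piFinset]
    intro j
    by_cases hX : (Finset.univ.filter
        (fun p : Fin (len j) => x ⟨j, p⟩ ∈ H ⟨j, p⟩)).Nonempty
    · simp only [chainKey, dif_pos hX]
      apply Finset.mem_insert_of_mem
      apply Finset.mem_image_of_mem
      rw [Finset.mem_sigma]
      refine ⟨Finset.mem_univ _, ?_⟩
      have := Finset.min'_mem _ hX
      simpa using this
    · simp [chainKey, hX]
  calc (X.image (chainKey H)).card
      ≤ (Fintype.piFinset (fun j : Fin m =>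
          insert none ((Finset.univ.sigma
            (fun p : Fin (len j) => H ⟨j, p⟩)).image some))).card :=
        Finset.card_le_card hsub
    _ = ∏ j : Fin m, (insert none ((Finset.univ.sigma
          (fun p : Fin (len j) => H ⟨j, p⟩)).image some)).card :=
        Fintype.card_piFinset _
    _ ≤ ∏ j : Fin m, (1 + len j * (k - 1)) := by
        apply Finset.prod_le_prod'
        intro j _
        have h1 : ((Finset.univ.sigma
            (fun p : Fin (len j) => H ⟨j, p⟩)).image some).card
            = len j * (k - 1) := by
          rw [Finset.card_image_of_injective _ (Option.some_injective _),
            Finset.card_sigma]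
          simp [hHcard]
        calc (insert none ((Finset.univ.sigma
              (fun p : Fin (len j) => H ⟨j, p⟩)).image some)).card
            ≤ ((Finset.univ.sigma
              (fun p : Fin (len j) => H ⟨j, p⟩)).image some).card + 1 :=
              Finset.card_insert_le _ _
          _ = 1 + len j * (k - 1) := by rw [h1, Nat.add_comm]

end
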